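/- arXiv:1904.12350 — 6 statements merged into one kernel-verified Lean document; each statement's English description precedes it below -/
import Mathlib

section
/- Let G be a group and let T = {g ∈ G : g² = 1 and g ≠ 1} be its set of elements of order two. In the quotient abelian group Q = Z[G]/⟨g + g⁻¹ (for all g ∈ G), 1⟩ of the integral group ring, the image of each t ∈ T has order exactly 2, and the images of distinct elements of T are linearly independent over F₂; hence they span a subgroup of Q isomorphic to the F₂-vector space with basis T. -/
/-- The relation subgroup of the integral group ring `G →₀ ℤ`
generated by the identity element `1` and all elements `g + g⁻¹`. -/
noncomputable def relQ (G : Type*) [Group G] : AddSubgroup (G →₀ ℤ) :=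
  AddSubgroup.closure ({Finsupp.single (1 : G) (1 : ℤ)} ∪
    {x | ∃ g : G, x = Finsupp.single g 1 + Finsupp.single g⁻¹ 1})

section Aux

open scoped Classical

variable (G : Type*) [Group G]

/-- Auxiliary: the F₂-counting homomorphism. -/
noncomputable def auxPhi : (G →₀ ℤ) →+ ({g : G | g ^ 2 = 1 ∧ g ≠ 1} →₀ ZMod 2) :=
  Finsupp.liftAddHom fun g =>
    if h : g ^ 2 = 1 ∧ g ≠ 1 then
      (Finsupp.singleAddHom (⟨g, h⟩ : {g : G | g ^ 2 = 1 ∧ g ≠ 1})).comp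
        (Int.castAddHom (ZMod 2))
    else 0

lemma auxPhi_single (g : G) (c : ℤ) :
    auxPhi G (Finsupp.single g c) =
      if h : g ^ 2 = 1 ∧ g ≠ 1 then
        Finsupp.single (⟨g, h⟩ : {g : G | g ^ 2 = 1 ∧ g ≠ 1}) (c : ZMod 2)
      else 0 := by
  rw [auxPhi, Finsupp.liftAddHom_apply_single]
  split <;> rfl

lemma relQ_le_ker : relQ G ≤ (auxPhi G).ker := by
  rw [relQ, AddSubgroup.closure_le]
  rintro x (rfl | ⟨g, rfl⟩)
  · simp only [SetLike.mem_coe, AddMonoidHom.mem_ker, auxPhi_single]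
    rw [dif_neg]; rintro ⟨-, h⟩; exact h rfl
  · simp only [SetLike.mem_coe, AddMonoidHom.mem_ker, map_add, auxPhi_single]
    by_cases h : g ^ 2 = 1 ∧ g ≠ 1
    · have hinv : g⁻¹ = g := by
        have h1 := h.1
        rw [pow_two] at h1
        rw [inv_eq_of_mul_eq_one_right h1]
      rw [dif_pos h, hinv, dif_pos h, ← Finsupp.single_add,
        show ((1 : ℤ) : ZMod 2) + ((1 : ℤ) : ZMod 2) = 0 by decide, Finsupp.single_zero]
    · have h' : ¬((g⁻¹) ^ 2 = 1 ∧ g⁻¹ ≠ 1) := by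
        rintro ⟨h1, h2⟩
        apply h
        constructor
        · rw [← inv_inv g, inv_pow, h1, inv_one]
        · intro hg; rw [hg, inv_one] at h2; exact h2 rfl
      rw [dif_neg h, dif_neg h', add_zero]

/-- Auxiliary: descend `auxPhi` to the quotient. -/
noncomputable def auxPsi : ((G →₀ ℤ) ⧸ relQ G) →+ ({g : G | g ^ 2 = 1 ∧ g ≠ 1} →₀ ZMod 2) :=
  QuotientAddGroup.lift (relQ G) (auxPhi G) (fun _ hx => relQ_le_ker G hx)

lemma auxPsi_mk (x : G →₀ ℤ) :
    auxPsi G (QuotientAddGroup.mk' (relQ G) x) = auxPhi G x := rfl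

lemma two_smul_zero (t : G) (ht : t ^ 2 = 1 ∧ t ≠ 1) :
    (2 : ℤ) • (QuotientAddGroup.mk' (relQ G) (Finsupp.single t 1)) = 0 := by
  rw [← map_zsmul, QuotientAddGroup.mk'_apply, QuotientAddGroup.eq_zero_iff]
  have hinv : t⁻¹ = t := by
    have h1 := ht.1
    rw [pow_two] at h1
    rw [inv_eq_of_mul_eq_one_right h1]
  have heq : (2 : ℤ) • Finsupp.single t (1 : ℤ) =
      Finsupp.single t 1 + Finsupp.single t⁻¹ 1 := by
    rw [hinv, ← Finsupp.single_add, Finsupp.smul_single]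
    norm_num
  rw [heq, relQ]
  exact AddSubgroup.subset_closure (Or.inr ⟨t, rfl⟩)

/-- Auxiliary: the section from `T →₀ ZMod 2` back to the quotient. -/
noncomputable def auxSigma : ({g : G | g ^ 2 = 1 ∧ g ≠ 1} →₀ ZMod 2) →+ ((G →₀ ℤ) ⧸ relQ G) :=
  Finsupp.liftAddHom fun t =>
    ZMod.lift 2 ⟨zmultiplesHom _ (QuotientAddGroup.mk' (relQ G) (Finsupp.single (t : G) 1)),
      two_smul_zero G t t.2⟩

lemma auxSigma_single_one (t : {g : G | g ^ 2 = 1 ∧ g ≠ 1}) :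
    auxSigma G (Finsupp.single t 1) =
      QuotientAddGroup.mk' (relQ G) (Finsupp.single (t : G) 1) := by
  rw [auxSigma, Finsupp.liftAddHom_apply_single]
  have h1 : (1 : ZMod 2) = ((1 : ℤ) : ZMod 2) := by decide
  rw [h1, ZMod.lift_coe]
  simp [zmultiplesHom]

lemma zmodHom_ext {M : Type*} [AddMonoid M] (f g : ZMod 2 →+ M) (h : f 1 = g 1) : f = g := by
  ext x
  fin_cases x
  · exact (map_zero f).trans (map_zero g).symm
  · exact h

lemma auxPsi_sigma (x : {g : G | g ^ 2 = 1 ∧ g ≠ 1} →₀ ZMod 2) :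
    auxPsi G (auxSigma G x) = x := by
  have key : (auxPsi G).comp (auxSigma G) = AddMonoidHom.id _ := by
    apply Finsupp.addHom_ext'
    intro t
    apply zmodHom_ext
    simp only [AddMonoidHom.comp_apply, AddMonoidHom.coe_comp, Function.comp_apply,
      Finsupp.singleAddHom_apply, AddMonoidHom.id_comp]
    have ht' : (t : G) ^ 2 = 1 ∧ (t : G) ≠ 1 := t.2
    rw [auxSigma_single_one, auxPsi_mk, auxPhi_single, dif_pos ht']
    simp
  exact DFunLike.congr_fun key x

end Aux

theorem stmt0 (G : Type*) [Group G] :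
    ∀ (T : Set G), T = {g | g ^ 2 = 1 ∧ g ≠ 1} →
    ∀ π : (G →₀ ℤ) →+ (G →₀ ℤ) ⧸ relQ G, π = QuotientAddGroup.mk' (relQ G) →
    (∀ t ∈ T, addOrderOf (π (Finsupp.single t 1)) = 2) ∧
    (∀ s : Finset G, ↑s ⊆ T → (∑ t ∈ s, π (Finsupp.single t 1)) = 0 → s = ∅) ∧
    ∃ e : (T →₀ ZMod 2) ≃+
        AddSubgroup.closure ((fun t : G => π (Finsupp.single t 1)) '' T),
      ∀ t : T, (e (Finsupp.single t 1) : (G →₀ ℤ) ⧸ relQ G) =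
        π (Finsupp.single (t : G) 1) := by
  classical
  rintro T rfl π rfl
  set T : Set G := {g | g ^ 2 = 1 ∧ g ≠ 1} with hT
  have hpsi_single : ∀ (t : G) (ht : t ∈ T),
      auxPsi G (QuotientAddGroup.mk' (relQ G) (Finsupp.single t 1)) =
        Finsupp.single (⟨t, ht⟩ : T) 1 := by
    intro t ht
    have ht' : t ^ 2 = 1 ∧ t ≠ 1 := ht
    rw [auxPsi_mk, auxPhi_single, dif_pos ht']
    simp
  have hne : ∀ (t : G), t ∈ T →
      QuotientAddGroup.mk' (relQ G) (Finsupp.single t 1) ≠ 0 := by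
    intro t ht h0
    have h1 := hpsi_single t ht
    rw [h0, map_zero] at h1
    exact one_ne_zero (Finsupp.single_eq_zero.mp h1.symm)
  refine ⟨?_, ?_, ?_⟩
  · intro t ht
    haveI : Fact (Nat.Prime 2) := ⟨Nat.prime_two⟩
    exact addOrderOf_eq_prime (by have h2 := two_smul_zero G t ht; rw [two_zsmul] at h2; rwa [two_nsmul]) (hne t ht)
  · intro s hs hsum
    by_contra hsne
    obtain ⟨t0, ht0⟩ := Finset.nonempty_of_ne_empty hsne
    have h1 := congrArg (auxPsi G) hsum
    rw [map_sum, map_zero] at h1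
    have h3 := congrArg (fun f => f (⟨t0, hs ht0⟩ : T)) h1
    simp only [Finsupp.finset_sum_apply, Finsupp.coe_zero, Pi.zero_apply] at h3
    have h4 : ∑ t ∈ s, (auxPsi G (QuotientAddGroup.mk' (relQ G) (Finsupp.single t 1)))
        (⟨t0, hs ht0⟩ : T) = ∑ t ∈ s, if t = t0 then (1 : ZMod 2) else 0 := by
      apply Finset.sum_congr rfl
      intro t htin
      rw [hpsi_single t (hs htin), Finsupp.single_apply]
      by_cases htt : t = t0
      · subst htt; simp
      · rw [if_neg (by simp [Subtype.ext_iff, htt]), if_neg htt]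
    rw [h4, Finset.sum_ite_eq' s t0 (fun _ => (1 : ZMod 2)), if_pos ht0] at h3
    exact one_ne_zero h3
  · have hmem : ∀ x : T →₀ ZMod 2, auxSigma G x ∈
        AddSubgroup.closure
          ((fun t : G => QuotientAddGroup.mk' (relQ G) (Finsupp.single t 1)) '' T) := by
      intro x
      induction x using Finsupp.induction_linear with
      | zero => rw [map_zero]; exact zero_mem _
      | add a b ha hb => rw [map_add]; exact AddSubgroup.add_mem _ ha hb
      | single t c =>
        have hc : c = c.val • (1 : ZMod 2) := by
          revert c; decide
        rw [hc, ← Finsupp.smul_single, map_nsmul]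
        exact AddSubgroup.nsmul_mem _
          (by rw [auxSigma_single_one]
              exact AddSubgroup.subset_closure ⟨t, t.2, rfl⟩) _
    have hright : ∀ y ∈ AddSubgroup.closure
        ((fun t : G => QuotientAddGroup.mk' (relQ G) (Finsupp.single t 1)) '' T),
        auxSigma G (auxPsi G y) = y := by
      intro y hy
      induction hy using AddSubgroup.closure_induction with
      | mem z hz =>
        obtain ⟨t, ht, rfl⟩ := hz
        rw [hpsi_single t ht, auxSigma_single_one]
      | zero => simp
      | add a b _ _ ha hb => rw [map_add, map_add, ha, hb]
      | neg a _ ha => rw [map_neg, map_neg, ha]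
    refine ⟨{ toFun := fun x => ⟨auxSigma G x, hmem x⟩
              invFun := fun y => auxPsi G (y : (G →₀ ℤ) ⧸ relQ G)
              left_inv := fun x => auxPsi_sigma G x
              right_inv := fun y => Subtype.ext (hright y y.2)
              map_add' := fun a b => Subtype.ext (map_add _ a b) }, ?_⟩
    intro t
    exact auxSigma_single_one G t
end

section
/- Let G be a group with involution on Z[G] induced by ḡ = g⁻¹, extended linearly. This involution descends to the quotient abelian group Q = Z[G]/⟨g + g⁻¹, 1⟩, and the set of fixed points of the induced involution on Q is exactly the subgroup F₂T generated by the images of the elements of order two of G. -/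
/-- The involution of the integral group ring induced by `g ↦ g⁻¹`. -/
noncomputable def conjHom (G : Type*) [Group G] : (G →₀ ℤ) →+ (G →₀ ℤ) :=
  Finsupp.mapDomain.addMonoidHom (fun g : G => g⁻¹)

section Aux

open scoped Classical

variable {G : Type*} [Group G]

/-- A sign function choosing an orientation on each pair `{g, g⁻¹}`. -/
noncomputable def mySig (g : G) : ℤ :=
  if WellOrderingRel g g⁻¹ then 1 else if WellOrderingRel g⁻¹ g then -1 else 0

/-- A chosen representative of the pair `{g, g⁻¹}`. -/
noncomputable def myRep (g : G) : G := if WellOrderingRel g g⁻¹ then g else g⁻¹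

lemma mySig_self (g : G) (h : g⁻¹ = g) : mySig g = 0 := by
  simp [mySig, h, irrefl]

lemma mySig_inv (g : G) : mySig g⁻¹ = - mySig g := by
  rcases trichotomous_of WellOrderingRel g g⁻¹ with h | h | h
  · have h1 : ¬ WellOrderingRel g⁻¹ g := asymm h
    simp [mySig, h, h1, inv_inv]
  · rw [mySig_self g h.symm, mySig_self g⁻¹ (by rw [inv_inv]; exact h), neg_zero]
  · have h1 : ¬ WellOrderingRel g g⁻¹ := asymm h
    simp [mySig, h, h1, inv_inv]

lemma myRep_inv (g : G) : myRep g⁻¹ = myRep g := by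
  rcases trichotomous_of WellOrderingRel g g⁻¹ with h | h | h
  · have h1 : ¬ WellOrderingRel g⁻¹ g := asymm h
    simp [myRep, h, h1, inv_inv]
  · simp [myRep, ← h]
  · have h1 : ¬ WellOrderingRel g g⁻¹ := asymm h
    simp [myRep, h, h1, inv_inv]

/-- The "free part" homomorphism, singling out the torsion-free component of `Q`. -/
noncomputable def freePart (G : Type*) [Group G] : (G →₀ ℤ) →+ (G →₀ ℤ) :=
  Finsupp.liftAddHom (fun g => (zmultiplesHom _) (mySig g • Finsupp.single (myRep g) (1 : ℤ)))

lemma freePart_single (g : G) (n : ℤ) :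
    freePart G (Finsupp.single g n) = n • mySig g • Finsupp.single (myRep g) (1 : ℤ) := by
  simp [freePart, Finsupp.liftAddHom_apply_single, zmultiplesHom_apply]

end Aux

theorem stmt1 (G : Type*) [Group G]
    (T : Set G) (hT : T = {g | g ^ 2 = 1 ∧ g ≠ 1})
    (π : (G →₀ ℤ) →+ (G →₀ ℤ) ⧸ relQ G) (hπ : π = QuotientAddGroup.mk' (relQ G)) :
    (∀ x ∈ relQ G, conjHom G x ∈ relQ G) ∧
    ∃ conjQ : ((G →₀ ℤ) ⧸ relQ G) →+ ((G →₀ ℤ) ⧸ relQ G),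
      (∀ x : G →₀ ℤ, conjQ (π x) = π (conjHom G x)) ∧
      {q | conjQ q = q} =
        (AddSubgroup.closure ((fun t : G => π (Finsupp.single t 1)) '' T) :
          Set ((G →₀ ℤ) ⧸ relQ G)) := by
  subst hπ
  set π := QuotientAddGroup.mk' (relQ G) with hπ
  have hπ_apply : ∀ x : G →₀ ℤ, π x = QuotientAddGroup.mk x := fun x => rfl
  -- membership of generators
  have hgen1 : Finsupp.single (1 : G) (1 : ℤ) ∈ relQ G :=
    AddSubgroup.subset_closure (Or.inl rfl)
  have hgen2 : ∀ g : G, Finsupp.single g (1 : ℤ) + Finsupp.single g⁻¹ 1 ∈ relQ G :=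
    fun g => AddSubgroup.subset_closure (Or.inr ⟨g, rfl⟩)
  -- the involution preserves the relation subgroup
  have hconj_le : relQ G ≤ (relQ G).comap (conjHom G) := by
    rw [relQ, AddSubgroup.closure_le]
    rintro y (rfl | ⟨g, rfl⟩) <;>
      simp only [SetLike.mem_coe, AddSubgroup.mem_comap, conjHom, map_add,
        Finsupp.mapDomain.addMonoidHom_apply, Finsupp.mapDomain_single, inv_one]
    · exact hgen1
    · exact hgen2 g⁻¹
  have hconj_rel : ∀ x ∈ relQ G, conjHom G x ∈ relQ G := fun x hx => hconj_le hx
  refine ⟨hconj_rel, QuotientAddGroup.map _ _ (conjHom G) hconj_le, fun x => ?_, ?_⟩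
  · exact QuotientAddGroup.map_mk' _ _ _ _ x
  -- key fact: conjugation on the quotient is negation
  have hsum : ∀ x : G →₀ ℤ, conjHom G x + x ∈ relQ G := by
    intro x
    induction x using Finsupp.induction_linear with
    | zero => simpa using (relQ G).zero_mem
    | add f g hf hg =>
        have : conjHom G (f + g) + (f + g) = (conjHom G f + f) + (conjHom G g + g) := by
          rw [map_add]; abel
        rw [this]; exact add_mem hf hg
    | single a b =>
        have h1 : conjHom G (Finsupp.single a b) + Finsupp.single a b
            = b • (Finsupp.single a⁻¹ (1 : ℤ) + Finsupp.single a 1) := by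
          simp [conjHom, Finsupp.mapDomain_single, smul_add, Finsupp.smul_single']
        rw [h1]
        have h2 := hgen2 a⁻¹
        rw [inv_inv] at h2
        exact zsmul_mem h2 b
  have hneg : ∀ q : (G →₀ ℤ) ⧸ relQ G,
      (QuotientAddGroup.map (relQ G) (relQ G) (conjHom G) hconj_le) q = -q := by
    intro q
    obtain ⟨x, rfl⟩ := QuotientAddGroup.mk'_surjective (relQ G) q
    rw [QuotientAddGroup.map_mk' _ _ _ _ x]
    have h0 : π (conjHom G x + x) = 0 := (QuotientAddGroup.eq_zero_iff _).mpr (hsum x)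
    rw [map_add] at h0
    exact eq_neg_of_add_eq_zero_left h0
  -- the subgroup K = relQ ⊔ span of order-two singles
  set S : Set (G →₀ ℤ) := (fun t : G => Finsupp.single t (1 : ℤ)) '' T with hS
  set K : AddSubgroup (G →₀ ℤ) := relQ G ⊔ AddSubgroup.closure S with hK
  have hrelK : relQ G ≤ K := le_sup_left
  have hSle : AddSubgroup.closure S ≤ K := le_sup_right
  have hSK : ∀ t ∈ T, Finsupp.single t (1 : ℤ) ∈ K := fun t ht =>
    hSle (AddSubgroup.subset_closure ⟨t, ht, rfl⟩)
  -- relQ is contained in the kernel of freePart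
  have hker : relQ G ≤ (freePart G).ker := by
    rw [relQ, AddSubgroup.closure_le]
    rintro y (rfl | ⟨g, rfl⟩) <;>
      simp only [SetLike.mem_coe, AddMonoidHom.mem_ker, map_add, freePart_single]
    · rw [mySig_self (1 : G) inv_one]; simp
    · rw [mySig_inv, myRep_inv]; simp
  -- every element is congruent mod K to its free part
  have hKfree : ∀ x : G →₀ ℤ, x - freePart G x ∈ K := by
    intro x
    induction x using Finsupp.induction_linear with
    | zero => simpa using K.zero_mem
    | add f g hf hg =>
        have : (f + g) - freePart G (f + g) = (f - freePart G f) + (g - freePart G g) := by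
          rw [map_add]; abel
        rw [this]; exact add_mem hf hg
    | single a b =>
        rw [freePart_single]
        rcases trichotomous_of WellOrderingRel a a⁻¹ with h | h | h
        · have hs : mySig a = 1 := by simp [mySig, h]
          have hr : myRep a = a := by simp [myRep, h]
          rw [hs, hr, one_smul, Finsupp.smul_single', mul_one, sub_self]
          exact K.zero_mem
        · -- a = a⁻¹
          have hs : mySig a = 0 := mySig_self a h.symm
          rw [hs, zero_smul, smul_zero, sub_zero]
          by_cases h1 : a = 1
          · subst h1
            have he : Finsupp.single (1 : G) b = b • Finsupp.single (1 : G) (1 : ℤ) := by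
              rw [Finsupp.smul_single', mul_one]
            rw [he]
            exact zsmul_mem (hrelK hgen1) b
          · have hat : a ∈ T := by
              rw [hT]
              exact ⟨by rw [sq]; exact mul_eq_one_iff_eq_inv.mpr h, h1⟩
            have he : Finsupp.single a b = b • Finsupp.single a (1 : ℤ) := by
              rw [Finsupp.smul_single', mul_one]
            rw [he]
            exact zsmul_mem (hSK a hat) b
        · have h1 : ¬ WellOrderingRel a a⁻¹ := asymm h
          have hs : mySig a = -1 := by simp [mySig, h, h1]
          have hr : myRep a = a⁻¹ := by simp [myRep, h1]
          rw [hs, hr]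
          have he : Finsupp.single a b - b • (-1 : ℤ) • Finsupp.single a⁻¹ (1 : ℤ)
              = b • (Finsupp.single a (1 : ℤ) + Finsupp.single a⁻¹ 1) := by
            rw [smul_add, Finsupp.smul_single', mul_one]
            simp [sub_eq_add_neg]
          rw [he]
          exact zsmul_mem (hrelK (hgen2 a)) b
  -- conclude
  ext q
  simp only [Set.mem_setOf_eq, SetLike.mem_coe]
  constructor
  · intro hq
    obtain ⟨x, rfl⟩ := QuotientAddGroup.mk'_surjective (relQ G) q
    rw [hneg] at hq
    have h0 : π x + π x = 0 := neg_eq_iff_add_eq_zero.mp hq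
    have h2 : x + x ∈ relQ G := by
      rw [← QuotientAddGroup.ker_mk' (relQ G), ← hπ]
      exact AddMonoidHom.mem_ker.mpr (by rw [map_add]; exact h0)
    have hf0 : freePart G x = 0 := by
      have h3 : freePart G (x + x) = 0 := hker h2
      rw [map_add] at h3
      have h4 : (2 : ℤ) • freePart G x = 0 := by rw [two_smul]; exact h3
      rcases smul_eq_zero.mp h4 with h | h
      · norm_num at h
      · exact h
    have hxK : x ∈ K := by
      have h5 := hKfree x
      rwa [hf0, sub_zero] at h5
    have hmem : π x ∈ AddSubgroup.map π K := ⟨x, hxK, rfl⟩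
    rw [hK, AddSubgroup.map_sup] at hmem
    have hmap2 : AddSubgroup.map π (AddSubgroup.closure S)
        = AddSubgroup.closure ((fun t : G => π (Finsupp.single t 1)) '' T) := by
      rw [AddMonoidHom.map_closure, hS, Set.image_image]
    have hbot : AddSubgroup.map π (relQ G) ≤
        AddSubgroup.closure ((fun t : G => π (Finsupp.single t 1)) '' T) := by
      rintro y ⟨z, hz, rfl⟩
      have : π z = 0 := by
        apply AddMonoidHom.mem_ker.mp
        rw [hπ, QuotientAddGroup.ker_mk']
        exact hz
      rw [this]
      exact zero_mem _
    rw [hmap2] at hmem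
    exact (sup_le hbot le_rfl) hmem
  · intro hq
    have hfix : ∀ t ∈ T, (QuotientAddGroup.map (relQ G) (relQ G) (conjHom G) hconj_le)
        (π (Finsupp.single t (1 : ℤ))) = π (Finsupp.single t 1) := by
      intro t ht
      rw [hπ_apply, ← QuotientAddGroup.mk'_apply, QuotientAddGroup.map_mk' _ _ _ _ _]
      have h1 : t⁻¹ = t := by
        rw [hT] at ht
        exact inv_eq_of_mul_eq_one_right (by rw [← sq]; exact ht.1)
      have h2 : conjHom G (Finsupp.single t (1 : ℤ)) = Finsupp.single t 1 := by
        simp [conjHom, Finsupp.mapDomain_single, h1]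
      rw [h2]
      rfl
    set Fix : AddSubgroup ((G →₀ ℤ) ⧸ relQ G) :=
      { carrier := {q | (QuotientAddGroup.map (relQ G) (relQ G) (conjHom G) hconj_le) q = q}
        zero_mem' := by simp
        add_mem' := by
          intro a b ha hb
          simp only [Set.mem_setOf_eq, map_add] at *
          rw [ha, hb]
        neg_mem' := by
          intro a ha
          simp only [Set.mem_setOf_eq, map_neg] at *
          rw [ha] } with hFix
    have hle : AddSubgroup.closure ((fun t : G => π (Finsupp.single t 1)) '' T) ≤ Fix := by
      rw [AddSubgroup.closure_le]
      rintro y ⟨t, ht, rfl⟩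
      exact hfix t ht
    exact hle hq
end

section
/- Let A be an abelian group, G a group, Q = Z[G]/⟨g + g⁻¹, 1⟩, and let μ : A → Q be a map satisfying μ(a + b) = μ(a) + μ(b) + [λ(a,b)] for a biadditive map λ : A × A → Z[G] with λ identically zero, and satisfying μ(a) = conj(μ(a)) for all a (where conj is the involution induced by g ↦ g⁻¹). Then μ is a group homomorphism whose image lies in the subgroup F₂T of Q, and in particular μ(2a) = 0 for all a ∈ A. -/
lemma conjHom_single {G : Type*} [Group G] (g : G) (c : ℤ) :
    conjHom G (Finsupp.single g c) = Finsupp.single g⁻¹ c := by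
  simp [conjHom, Finsupp.mapDomain.addMonoidHom_apply, Finsupp.mapDomain_single]

lemma conjHom_apply {G : Type*} [Group G] (x : G →₀ ℤ) (g : G) :
    conjHom G x g = x g⁻¹ := by
  rw [conjHom, Finsupp.mapDomain.addMonoidHom_apply]
  conv_lhs => rw [show g = (g⁻¹)⁻¹ by simp]
  exact Finsupp.mapDomain_apply inv_injective x g⁻¹

/-- big generating set -/
def bigGens (G : Type*) [Group G] : Set (G →₀ ℤ) :=
  ({Finsupp.single (1 : G) (1 : ℤ)} ∪
    {x | ∃ g : G, x = Finsupp.single g 1 + Finsupp.single g⁻¹ 1}) ∪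
    ((fun t : G => Finsupp.single t (1 : ℤ)) '' {g | g ^ 2 = 1 ∧ g ≠ 1})

lemma mem_bigGens_one {G : Type*} [Group G] :
    Finsupp.single (1 : G) (1 : ℤ) ∈ bigGens G := Or.inl (Or.inl rfl)

lemma mem_bigGens_pair {G : Type*} [Group G] (g : G) :
    Finsupp.single g (1 : ℤ) + Finsupp.single g⁻¹ 1 ∈ bigGens G :=
  Or.inl (Or.inr ⟨g, rfl⟩)

lemma mem_bigGens_two {G : Type*} [Group G] (t : G) (h1 : t ^ 2 = 1) (h2 : t ≠ 1) :
    Finsupp.single t (1 : ℤ) ∈ bigGens G := Or.inr ⟨t, ⟨h1, h2⟩, rfl⟩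

lemma mem_relGens_pair {G : Type*} [Group G] (g : G) :
    Finsupp.single g (1 : ℤ) + Finsupp.single g⁻¹ 1 ∈
      (({Finsupp.single (1 : G) (1 : ℤ)} ∪
        {x | ∃ g : G, x = Finsupp.single g 1 + Finsupp.single g⁻¹ 1}) : Set (G →₀ ℤ)) :=
  Or.inr ⟨g, rfl⟩

lemma fixed_mem {G : Type*} [Group G] :
    ∀ (n : ℕ) (x : G →₀ ℤ), x.support.card = n → conjHom G x = x →
      x ∈ AddSubgroup.closure (bigGens G) := by
  intro n
  induction n using Nat.strong_induction_on with
  | _ n ih =>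
    intro x hcard hx
    classical
    rcases Nat.eq_zero_or_pos n with h0 | hpos
    · have : x = 0 := by
        rw [← Finsupp.support_eq_empty, ← Finset.card_eq_zero, hcard, h0]
      rw [this]
      exact AddSubgroup.zero_mem _
    · have hne : x.support.Nonempty := Finset.card_pos.mp (hcard ▸ hpos)
      obtain ⟨g, hg⟩ := hne
      have hgc : x g ≠ 0 := Finsupp.mem_support_iff.mp hg
      have hsym : ∀ h : G, x h⁻¹ = x h := fun h => by
        conv_rhs => rw [← hx, conjHom_apply]
      by_cases hgg : g⁻¹ = g
      · -- g is 1 or has order 2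
        set x' := x - Finsupp.single g (x g) with hx'def
        have hxd : x = x' + Finsupp.single g (x g) := by rw [hx'def]; abel
        have hx'e : x' = x.erase g := (Finsupp.erase_eq_sub_single x g).symm
        have hcard' : x'.support.card < n := by
          rw [hx'e, Finsupp.support_erase, ← hcard]
          exact Finset.card_erase_lt_of_mem hg
        have hfix' : conjHom G x' = x' := by
          rw [hx'def, map_sub, hx, conjHom_single, hgg]
        have hmem' := ih _ hcard' x' rfl hfix'
        have hsmem : Finsupp.single g (x g) ∈ AddSubgroup.closure (bigGens G) := by
          have : Finsupp.single g (x g) = (x g) • Finsupp.single g (1 : ℤ) := by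
            rw [Finsupp.smul_single, smul_eq_mul, mul_one]
          rw [this]
          by_cases h1 : g = 1
          · subst h1
            exact AddSubgroup.zsmul_mem _ (AddSubgroup.subset_closure mem_bigGens_one) _
          · refine AddSubgroup.zsmul_mem _ (AddSubgroup.subset_closure
              (mem_bigGens_two g ?_ h1)) _
            rw [pow_two]
            nth_rewrite 2 [← hgg]
            exact mul_inv_cancel g
        rw [hxd]
        exact AddSubgroup.add_mem _ hmem' hsmem
      · -- pair {g, g⁻¹}
        set c := x g with hc
        set x' := x - Finsupp.single g c - Finsupp.single g⁻¹ c with hx'def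
        have hx's : x'.support = (x.support.erase g).erase g⁻¹ := by
          ext h
          simp only [Finset.mem_erase, Finsupp.mem_support_iff, hx'def,
            Finsupp.sub_apply, Finsupp.single_apply]
          by_cases h1 : h = g
          · subst h1; simp [hgg, Ne.symm hgg, hgc, hc]
          · by_cases h2 : h = g⁻¹
            · subst h2
              simp [hgg, hsym g, hc, hgc, inv_injective.ne_iff.mpr (Ne.symm h1)]
              tauto
            · simp [Ne.symm h1, Ne.symm h2]
              tauto
        have hcard' : x'.support.card < n := by
          rw [hx's, ← hcard]
          calc ((x.support.erase g).erase g⁻¹).card ≤ (x.support.erase g).card :=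
                Finset.card_erase_le
            _ < x.support.card := Finset.card_erase_lt_of_mem hg
        have hfix' : conjHom G x' = x' := by
          rw [hx'def, map_sub, map_sub, hx, conjHom_single, conjHom_single, inv_inv]
          abel
        have hmem' := ih _ hcard' x' rfl hfix'
        have hxd : x = x' + c • (Finsupp.single g (1:ℤ) + Finsupp.single g⁻¹ 1) := by
          have h1 : c • (Finsupp.single g (1:ℤ) + Finsupp.single g⁻¹ 1)
              = Finsupp.single g c + Finsupp.single g⁻¹ c := by
            rw [smul_add, Finsupp.smul_single, Finsupp.smul_single, smul_eq_mul, mul_one]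
          rw [h1, hx'def]; abel
        have hsmem : c • (Finsupp.single g (1:ℤ) + Finsupp.single g⁻¹ 1) ∈
            AddSubgroup.closure (bigGens G) :=
          AddSubgroup.zsmul_mem _ (AddSubgroup.subset_closure
            (mem_bigGens_pair g)) _
        rw [hxd]
        exact AddSubgroup.add_mem _ hmem' hsmem

theorem stmt2 (A : Type*) [AddCommGroup A] (G : Type*) [Group G]
    (π : (G →₀ ℤ) →+ (G →₀ ℤ) ⧸ relQ G) (hπ : π = QuotientAddGroup.mk' (relQ G))
    (conjQ : ((G →₀ ℤ) ⧸ relQ G) →+ ((G →₀ ℤ) ⧸ relQ G))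
    (hconjQ : ∀ x : G →₀ ℤ, conjQ (π x) = π (conjHom G x))
    (μ : A → (G →₀ ℤ) ⧸ relQ G) (lam : A → A → (G →₀ ℤ))
    (hbil : ∀ a b c : A, lam (a + b) c = lam a c + lam b c ∧
      lam a (b + c) = lam a b + lam a c)
    (hlam : ∀ a b : A, lam a b = 0)
    (hμ : ∀ a b : A, μ (a + b) = μ a + μ b + π (lam a b))
    (hfix : ∀ a : A, conjQ (μ a) = μ a) :
    (∀ a b : A, μ (a + b) = μ a + μ b) ∧
    (∀ a : A, μ a ∈ AddSubgroup.closure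
      ((fun t : G => π (Finsupp.single t 1)) '' {g | g ^ 2 = 1 ∧ g ≠ 1})) ∧
    (∀ a : A, μ ((2 : ℤ) • a) = 0) := by
  -- π vanishes exactly on relQ
  have hker : ∀ y : G →₀ ℤ, π y = 0 ↔ y ∈ relQ G := by
    intro y
    rw [hπ]
    exact QuotientAddGroup.eq_zero_iff y
  -- x + conjHom x ∈ relQ for all x
  have hrel : ∀ x : G →₀ ℤ, x + conjHom G x ∈ relQ G := by
    intro x
    induction x using Finsupp.induction with
    | zero => simpa using AddSubgroup.zero_mem _
    | single_add a b f _ _ hf =>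
      have : Finsupp.single a b + f + conjHom G (Finsupp.single a b + f)
          = (Finsupp.single a b + Finsupp.single a⁻¹ b) + (f + conjHom G f) := by
        rw [map_add, conjHom_single]; abel
      rw [this]
      refine AddSubgroup.add_mem _ ?_ hf
      have h1 : Finsupp.single a b + Finsupp.single a⁻¹ b
          = b • (Finsupp.single a (1:ℤ) + Finsupp.single a⁻¹ 1) := by
        rw [smul_add, Finsupp.smul_single, Finsupp.smul_single, smul_eq_mul, mul_one]
      rw [h1]
      exact AddSubgroup.zsmul_mem _ (AddSubgroup.subset_closure (mem_relGens_pair a)) _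
  have hneg : ∀ x : G →₀ ℤ, π (conjHom G x) = - π x := by
    intro x
    have := (hker (x + conjHom G x)).mpr (hrel x)
    rw [map_add, add_comm] at this
    exact eq_neg_of_add_eq_zero_left this
  -- μ a + μ a = 0
  have htwo : ∀ a : A, μ a + μ a = 0 := by
    intro a
    obtain ⟨x, hxa⟩ := QuotientAddGroup.mk'_surjective (relQ G) (μ a)
    have hxa' : π x = μ a := by rw [hπ]; exact hxa
    have h := hfix a
    rw [← hxa', hconjQ, hneg] at h
    rw [← hxa']
    nth_rewrite 1 [← h]
    exact neg_add_cancel _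
  have hadd : ∀ a b : A, μ (a + b) = μ a + μ b := by
    intro a b
    rw [hμ, hlam, map_zero, add_zero]
  refine ⟨hadd, ?_, ?_⟩
  · intro a
    obtain ⟨x, hxa⟩ := QuotientAddGroup.mk'_surjective (relQ G) (μ a)
    have hxa' : π x = μ a := by rw [hπ]; exact hxa
    -- 2x ∈ relQ
    have h2x : x + x ∈ relQ G := by
      rw [← hker, map_add, hxa', htwo a]
    -- the hom y ↦ y - conjHom y kills relQ
    classical
    set Φ : (G →₀ ℤ) →+ (G →₀ ℤ) := AddMonoidHom.id _ - conjHom G with hΦ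
    have hΦrel : ∀ y ∈ relQ G, Φ y = 0 := by
      intro y hy
      have : relQ G ≤ Φ.ker := by
        rw [relQ]
        refine (AddSubgroup.closure_le _).mpr ?_
        rintro z (hz | ⟨g, rfl⟩)
        · simp only [Set.mem_singleton_iff] at hz
          subst hz
          simp [hΦ, AddMonoidHom.mem_ker, conjHom_single]
        · simp [hΦ, AddMonoidHom.mem_ker, conjHom_single, inv_inv]
          abel
      exact this hy
    have hΦx : Φ x = 0 := by
      have h := hΦrel _ h2x
      rw [map_add] at h
      ext g
      have := DFunLike.congr_fun h g
      simp only [Finsupp.add_apply, Finsupp.coe_zero, Pi.zero_apply] at this ⊢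
      omega
    have hfx : conjHom G x = x := by
      have h0 : x - conjHom G x = 0 := by
        simpa [hΦ] using hΦx
      exact (sub_eq_zero.mp h0).symm
    have hxmem := fixed_mem x.support.card x rfl hfx
    -- push forward through π
    have hmap : π x ∈ AddSubgroup.map π (AddSubgroup.closure (bigGens G)) :=
      ⟨x, hxmem, rfl⟩
    rw [AddMonoidHom.map_closure] at hmap
    have hle : AddSubgroup.closure (π '' bigGens G) ≤ AddSubgroup.closure
        ((fun t : G => π (Finsupp.single t 1)) '' {g | g ^ 2 = 1 ∧ g ≠ 1}) := by
      refine (AddSubgroup.closure_le _).mpr ?_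
      rintro y ⟨z, hz, rfl⟩
      rcases hz with hz | ⟨t, ht, rfl⟩
      · have : π z = 0 := (hker z).mpr (AddSubgroup.subset_closure hz)
        rw [this]
        exact AddSubgroup.zero_mem _
      · exact AddSubgroup.subset_closure ⟨t, ht, rfl⟩
    rw [← hxa']
    exact hle hmap
  · intro a
    have h2 : (2 : ℤ) • a = a + a := two_zsmul a
    rw [h2, hadd, htwo]
end

section
/- Let G be a group and let ε₁,...,ε_m ∈ {+1, −1} and g₁,...,g_m ∈ G. Then the image of Σᵢ εᵢ gᵢ vanishes in the quotient abelian group Z[G]/⟨g − g⁻¹ : g ∈ G⟩ if and only if there exist exponents e₁,...,e_m ∈ {+1, −1} such that Σᵢ εᵢ gᵢ^{eᵢ} = 0 in Z[G]. -/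
/-- The subgroup of the integral group ring `G →₀ ℤ` generated by all
elements `g - g⁻¹` for `g ∈ G`. -/
noncomputable def relMinus (G : Type*) [Group G] : AddSubgroup (G →₀ ℤ) :=
  AddSubgroup.closure {x | ∃ g : G, x = Finsupp.single g 1 - Finsupp.single g⁻¹ 1}


lemma gen_coeff (G : Type*) [Group G] (a h : G) :
    (Finsupp.single a (1:ℤ) - Finsupp.single a⁻¹ 1 : G →₀ ℤ) h
      + (Finsupp.single a (1:ℤ) - Finsupp.single a⁻¹ 1 : G →₀ ℤ) h⁻¹ = 0 := by
  classical
  simp only [Finsupp.sub_apply, Finsupp.single_apply, inv_eq_iff_eq_inv, inv_inv]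
  ring

lemma mem_coeff (G : Type*) [Group G] (x : G →₀ ℤ) (hx : x ∈ relMinus G) (h : G) :
    x h + x h⁻¹ = 0 := by
  induction hx using AddSubgroup.closure_induction generalizing h with
  | mem y hy => obtain ⟨a, rfl⟩ := hy; exact gen_coeff G a h
  | zero => simp
  | add a b ha hb iha ihb =>
      simp only [Finsupp.add_apply]; have := iha h; have := ihb h; omega
  | neg a ha iha => simp only [Finsupp.neg_apply]; have := iha h; omega

lemma key (G : Type*) [Group G] (m : ℕ) (ε : Fin m → ℤ)
    (hε : ∀ i, ε i = 1 ∨ ε i = -1) (g : Fin m → G) (s : Finset (Fin m))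
    (H : ∀ h : G, (∑ i ∈ s, Finsupp.single (g i) (ε i)) h
        + (∑ i ∈ s, Finsupp.single (g i) (ε i)) h⁻¹ = 0) :
    ∃ e : Fin m → ℤ, (∀ i, e i = 1 ∨ e i = -1) ∧
      (∑ i ∈ s, Finsupp.single (g i ^ (e i)) (ε i)) = (0 : G →₀ ℤ) := by
  classical
  induction s using Finset.strongInduction with
  | _ s ih =>
    rcases s.eq_empty_or_nonempty with rfl | ⟨i₀, hi₀⟩
    · exact ⟨fun _ => 1, fun _ => Or.inl rfl, by simp⟩
    -- sum of ε over the class of i₀ is zero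
    have hsum : ∑ i ∈ s.filter (fun i => g i = g i₀ ∨ g i = (g i₀)⁻¹), ε i = 0 := by
      have H0 := H (g i₀)
      rw [Finset.sum_apply', Finset.sum_apply'] at H0
      simp only [Finsupp.single_apply] at H0
      by_cases hc : g i₀ = (g i₀)⁻¹
      · have h1 : ∀ i, (g i = g i₀ ∨ g i = (g i₀)⁻¹) ↔ g i = g i₀ := by
          intro i; constructor
          · rintro (h | h); exact h; rw [h, ← hc]
          · exact Or.inl
        rw [← hc] at H0
        rw [Finset.sum_filter]
        simp only [h1]
        omega
      · rw [Finset.filter_or, Finset.sum_union]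
        · rw [Finset.sum_filter, Finset.sum_filter]
          exact H0
        · rw [Finset.disjoint_filter]
          rintro i _ h1 h2
          exact hc (h1.symm.trans h2)
    -- find a partner j for i₀ with opposite sign
    set T := s.filter (fun i => g i = g i₀ ∨ g i = (g i₀)⁻¹) with hT
    have hi₀T : i₀ ∈ T := by
      simp [hT, hi₀]
    have hj : ∃ j ∈ T, j ≠ i₀ ∧ ε j = -ε i₀ := by
      by_contra hcon
      push_neg at hcon
      have hall : ∀ j ∈ T, ε j = ε i₀ := by
        intro j hjT
        by_cases hji : j = i₀
        · rw [hji]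
        · have h1 := hε j
          have h2 := hε i₀
          have h3 := hcon j hjT hji
          omega
      rw [Finset.sum_congr rfl hall, Finset.sum_const, nsmul_eq_mul] at hsum
      have hpos : 0 < T.card := Finset.card_pos.mpr ⟨i₀, hi₀T⟩
      rcases hε i₀ with h | h <;> rw [h] at hsum <;> omega
    obtain ⟨j, hjT, hji₀, hεj⟩ := hj
    have hjclass : g j = g i₀ ∨ g j = (g i₀)⁻¹ := (Finset.mem_filter.mp hjT).2
    have hjs : j ∈ s := (Finset.mem_filter.mp hjT).1
    have hjerase : j ∈ s.erase i₀ := Finset.mem_erase.mpr ⟨hji₀, hjs⟩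
    set s' := (s.erase i₀).erase j with hs'
    have hssub : s' ⊂ s :=
      lt_of_le_of_lt (Finset.erase_subset j (s.erase i₀)) (Finset.erase_ssubset hi₀)
    -- pairing term has vanishing symmetric coefficients
    have hD : ∀ h : G, (Finsupp.single (g j) (ε j)) h + (Finsupp.single (g i₀) (ε i₀)) h
        + ((Finsupp.single (g j) (ε j)) h⁻¹ + (Finsupp.single (g i₀) (ε i₀)) h⁻¹) = 0 := by
      intro h
      rcases hjclass with hc | hc <;>
        simp only [Finsupp.single_apply, hc, hεj, inv_eq_iff_eq_inv, inv_inv] <;>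
        split_ifs <;> ring
    have H' : ∀ h : G, (∑ i ∈ s', Finsupp.single (g i) (ε i)) h
        + (∑ i ∈ s', Finsupp.single (g i) (ε i)) h⁻¹ = 0 := by
      intro h
      have Hs := H h
      rw [← Finset.sum_erase_add s _ hi₀, ← Finset.sum_erase_add _ _ hjerase] at Hs
      simp only [Finsupp.add_apply, ← hs'] at Hs
      have := hD h
      omega
    obtain ⟨e, he, hzero⟩ := ih s' hssub H'
    refine ⟨Function.update (Function.update e i₀ 1) j (if g j = g i₀ then 1 else -1),
      ?_, ?_⟩
    · intro i
      by_cases h1 : i = j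
      · rw [h1, Function.update_self]
        split_ifs <;> simp
      · rw [Function.update_of_ne h1]
        by_cases h2 : i = i₀
        · rw [h2, Function.update_self]; left; rfl
        · rw [Function.update_of_ne h2]; exact he i
    · rw [← Finset.sum_erase_add s _ hi₀, ← Finset.sum_erase_add _ _ hjerase, ← hs']
      have hsum' : ∑ i ∈ s',
          Finsupp.single (g i ^ (Function.update (Function.update e i₀ 1) j
            (if g j = g i₀ then 1 else -1)) i) (ε i) = 0 := by
        rw [← hzero]
        refine Finset.sum_congr rfl (fun i hi => ?_)
        have h1 : i ≠ j := (Finset.mem_erase.mp hi).1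
        have h2 : i ≠ i₀ := (Finset.mem_erase.mp (Finset.mem_erase.mp hi).2).1
        rw [Function.update_of_ne h1, Function.update_of_ne h2]
      rw [hsum', Function.update_self, Function.update_of_ne hji₀.symm,
        Function.update_self]
      by_cases hc : g j = g i₀
      · rw [if_pos hc]
        simp [hc, hεj, ← Finsupp.single_add]
      · rw [if_neg hc]
        have hc' : g j = (g i₀)⁻¹ := hjclass.resolve_left hc
        rw [zpow_neg_one, hc', inv_inv, zpow_one]
        simp [hεj, ← Finsupp.single_add]


theorem stmt4 (G : Type*) [Group G] (m : ℕ)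
    (ε : Fin m → ℤ) (hε : ∀ i, ε i = 1 ∨ ε i = -1) (g : Fin m → G) :
    ((QuotientAddGroup.mk' (relMinus G)) (∑ i, Finsupp.single (g i) (ε i)) = 0) ↔
    ∃ e : Fin m → ℤ, (∀ i, e i = 1 ∨ e i = -1) ∧
      (∑ i, Finsupp.single (g i ^ (e i)) (ε i)) = (0 : G →₀ ℤ) := by
  classical
  rw [QuotientAddGroup.mk'_apply, QuotientAddGroup.eq_zero_iff]
  constructor
  · intro h0
    exact key G m ε hε g Finset.univ (fun h => mem_coeff G _ h0 h)
  · rintro ⟨e, he, hz⟩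
    have heq : (∑ i, Finsupp.single (g i) (ε i))
        = ∑ i, (Finsupp.single (g i) (ε i) - Finsupp.single (g i ^ e i) (ε i)) := by
      rw [Finset.sum_sub_distrib, hz, sub_zero]
    rw [heq]
    refine AddSubgroup.sum_mem _ (fun i _ => ?_)
    rcases he i with h1 | h1
    · rw [h1, zpow_one, sub_self]
      exact zero_mem _
    · rw [h1, zpow_neg_one]
      have h2 : Finsupp.single (g i) (ε i) - Finsupp.single (g i)⁻¹ (ε i)
          = ε i • (Finsupp.single (g i) (1:ℤ) - Finsupp.single (g i)⁻¹ 1) := by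
        simp [smul_sub, Finsupp.smul_single]
      rw [h2]
      refine AddSubgroup.zsmul_mem _ ?_ _
      apply AddSubgroup.subset_closure
      exact ⟨g i, rfl⟩
end

section
/- Let G be a group and Q = Z[G]/⟨g + g⁻¹, 1⟩. Choose a set S of representatives for the orbits of the inversion involution g ↦ g⁻¹ on the set {g ∈ G : g² ≠ 1}. Then Q is isomorphic as an abelian group to the direct sum of the F₂-vector space with basis T = {g ∈ G : g² = 1, g ≠ 1} and the free abelian group with basis S. -/
section Aux

variable {G : Type*} [Group G] {S : Set G}

/-- target abelian group -/
abbrev Tgt (G : Type*) [Group G] (S : Set G) :=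
  ({g : G // g ^ 2 = 1 ∧ g ≠ 1} →₀ ZMod 2) × (S →₀ ℤ)

open Classical in
/-- where the basis vector `g` goes -/
noncomputable def tgt (hrep : ∀ g : G, g ^ 2 ≠ 1 →
    ((g ∈ S ∧ g⁻¹ ∉ S) ∨ (g ∉ S ∧ g⁻¹ ∈ S))) (g : G) : Tgt G S :=
  if h : g ^ 2 = 1 then
    (if hg : g = 1 then 0 else (Finsupp.single ⟨g, h, hg⟩ 1, 0))
  else if hgS : g ∈ S then (0, Finsupp.single ⟨g, hgS⟩ 1)
  else (0, - Finsupp.single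
      ⟨g⁻¹, ((hrep g h).resolve_left (fun h' => hgS h'.1)).2⟩ 1)

lemma sq_eq_one_iff_inv_eq {g : G} : g ^ 2 = 1 ↔ g⁻¹ = g := by
  rw [pow_two]
  constructor
  · intro h; exact inv_eq_of_mul_eq_one_left h
  · intro h; nth_rewrite 1 [← h]; exact inv_mul_cancel g

lemma zmod_hom_ext {A : Type*} [AddCommGroup A] {f g : ZMod 2 →+ A}
    (h : f 1 = g 1) : f = g := by
  ext x
  obtain ⟨y, rfl⟩ := ZMod.intCast_surjective x
  have : ((y : ℤ) : ZMod 2) = y • (1 : ZMod 2) := by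
    simp [zsmul_eq_mul]
  rw [this, map_zsmul, map_zsmul, h]

end Aux

theorem stmt14 (G : Type*) [Group G] (S : Set G)
    (hS : ∀ g ∈ S, g ^ 2 ≠ 1)
    (hrep : ∀ g : G, g ^ 2 ≠ 1 →
      ((g ∈ S ∧ g⁻¹ ∉ S) ∨ (g ∉ S ∧ g⁻¹ ∈ S))) :
    Nonempty (((G →₀ ℤ) ⧸ relQ G) ≃+
      (({g : G // g ^ 2 = 1 ∧ g ≠ 1} →₀ ZMod 2) × (S →₀ ℤ))) := by
  classical
  set T := Tgt G S with hT
  -- the forward homomorphism on the group ring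
  set φ : (G →₀ ℤ) →+ T :=
    Finsupp.liftAddHom (fun g => zmultiplesHom T (tgt hrep g)) with hφ
  have hφ_single : ∀ g : G, φ (Finsupp.single g 1) = tgt hrep g := by
    intro g
    simp [hφ, Finsupp.liftAddHom_apply_single]
  -- relQ is contained in the kernel of φ
  have hkerle : relQ G ≤ φ.ker := by
    rw [relQ]
    apply AddSubgroup.closure_le _ |>.2
    rintro x (rfl | ⟨g, rfl⟩) <;>
      simp only [SetLike.mem_coe, AddMonoidHom.mem_ker]
    · rw [hφ_single, tgt]
      simp
    · rw [map_add, hφ_single, hφ_single]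
      by_cases h : g ^ 2 = 1
      · have hinv : g⁻¹ = g := sq_eq_one_iff_inv_eq.1 h
        rw [hinv]
        by_cases hg : g = 1
        · rw [tgt]
          simp [h, hg]
        · rw [tgt]
          simp only [h, hg, dif_pos, dif_neg, not_false_iff]
          rw [Prod.mk_add_mk, ← Finsupp.single_add,
            show (1 + 1 : ZMod 2) = 0 by decide]
          simp
          rfl
      · have hinv2 : (g⁻¹) ^ 2 ≠ 1 := by
          intro H; apply h; rw [inv_pow, inv_eq_one] at H; exact H
        by_cases hgS : g ∈ S
        · have hginvS : g⁻¹ ∉ S := ((hrep g h).resolve_right (fun h' => h'.1 hgS)).2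
          rw [tgt, tgt]
          simp only [h, hinv2, hgS, hginvS, dif_neg, not_false_iff, dif_pos]
          have heq : ∀ (pf : (g⁻¹)⁻¹ ∈ S), (⟨(g⁻¹)⁻¹, pf⟩ : S) = ⟨g, hgS⟩ :=
            fun pf => Subtype.ext (inv_inv g)
          rw [heq, Prod.mk_add_mk]
          simp
          rfl
        · have hginvS : g⁻¹ ∈ S := ((hrep g h).resolve_left (fun h' => hgS h'.1)).2
          rw [tgt, tgt]
          simp only [h, hinv2, hgS, hginvS, dif_neg, not_false_iff, dif_pos]
          have heq : ∀ (pf : (g⁻¹)⁻¹ ∈ S), (⟨(g⁻¹)⁻¹, pf⟩ : S) = ⟨g, by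
              simpa using pf⟩ := by
            intro pf
            exact Subtype.ext (inv_inv g)
          rw [Prod.mk_add_mk]
          simp
          rfl
  have hker : ∀ x ∈ relQ G, φ x = 0 := fun x hx => hkerle hx
  -- the induced map on the quotient
  set φbar : ((G →₀ ℤ) ⧸ relQ G) →+ T :=
    QuotientAddGroup.lift (relQ G) φ hker with hφbar
  -- the inverse map
  have mem1 : Finsupp.single (1 : G) (1 : ℤ) ∈ relQ G :=
    AddSubgroup.subset_closure (Or.inl rfl)
  have memg : ∀ g : G, Finsupp.single g (1:ℤ) + Finsupp.single g⁻¹ 1 ∈ relQ G :=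
    fun g => AddSubgroup.subset_closure (Or.inr ⟨g, rfl⟩)
  set π : (G →₀ ℤ) →+ ((G →₀ ℤ) ⧸ relQ G) := QuotientAddGroup.mk' (relQ G) with hπ
  have h2tor : ∀ t : {g : G // g ^ 2 = 1 ∧ g ≠ 1},
      (zmultiplesHom _ (π (Finsupp.single (t : G) (1:ℤ)))) ((2:ℕ) : ℤ) = 0 := by
    rintro ⟨g, hg2, hg1⟩
    have hinv : g⁻¹ = g := sq_eq_one_iff_inv_eq.1 hg2
    simp only [zmultiplesHom_apply]
    rw [← map_zsmul π]
    rw [hπ, QuotientAddGroup.mk'_apply, QuotientAddGroup.eq_zero_iff]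
    have : ((2:ℕ):ℤ) • Finsupp.single g (1:ℤ) = Finsupp.single g 1 + Finsupp.single g⁻¹ 1 := by
      rw [hinv]
      push_cast
      rw [two_zsmul]
    rw [this]; exact memg g
  set ψ1 : ({g : G // g ^ 2 = 1 ∧ g ≠ 1} →₀ ZMod 2) →+ ((G →₀ ℤ) ⧸ relQ G) :=
    Finsupp.liftAddHom (fun t =>
      ZMod.lift 2 ⟨zmultiplesHom _ (π (Finsupp.single (t : G) (1:ℤ))), h2tor t⟩) with hψ1
  set ψ2 : (S →₀ ℤ) →+ ((G →₀ ℤ) ⧸ relQ G) :=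
    Finsupp.liftAddHom (fun s => zmultiplesHom _ (π (Finsupp.single (s : G) (1:ℤ)))) with hψ2
  set ψ : T →+ ((G →₀ ℤ) ⧸ relQ G) := ψ1.coprod ψ2 with hψ
  have hψ1_single : ∀ t, ψ1 (Finsupp.single t (1 : ZMod 2)) = π (Finsupp.single (t : G) (1:ℤ)) := by
    intro t
    rw [hψ1, Finsupp.liftAddHom_apply_single]
    rw [show (1 : ZMod 2) = ((1:ℤ) : ZMod 2) by norm_num, ZMod.lift_coe]
    simp
  have hψ2_single : ∀ s, ψ2 (Finsupp.single s (1 : ℤ)) = π (Finsupp.single (s : G) (1:ℤ)) := by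
    intro s
    rw [hψ2, Finsupp.liftAddHom_apply_single]
    simp
  have hψ_pair : ∀ (a : {g : G // g ^ 2 = 1 ∧ g ≠ 1} →₀ ZMod 2) (b : S →₀ ℤ),
      ψ (a, b) = ψ1 a + ψ2 b := fun a b => rfl
  -- key computation : ψ (tgt g) = π (single g 1)
  have key : ∀ g : G, ψ (tgt hrep g) = π (Finsupp.single g (1:ℤ)) := by
    intro g
    by_cases h : g ^ 2 = 1
    · by_cases hg : g = 1
      · subst hg
        rw [tgt, dif_pos (one_pow 2), dif_pos rfl, map_zero]
        symm
        rw [hπ, QuotientAddGroup.mk'_apply, QuotientAddGroup.eq_zero_iff]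
        exact mem1
      · rw [tgt]
        simp only [h, hg, dif_pos, dif_neg, not_false_iff]
        rw [show ((Finsupp.single (⟨g, h, hg⟩ : {g : G // g ^ 2 = 1 ∧ g ≠ 1}) (1 : ZMod 2),
            (0 : S →₀ ℤ)) : T) = ((Finsupp.single ⟨g, h, hg⟩ 1, 0) : T) from rfl]
        rw [hψ_pair, map_zero, add_zero, hψ1_single]
    · by_cases hgS : g ∈ S
      · rw [tgt]
        simp only [h, hgS, dif_neg, not_false_iff, dif_pos]
        rw [hψ_pair, map_zero, zero_add, hψ2_single]
      · rw [tgt]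
        simp only [h, hgS, dif_neg, not_false_iff]
        rw [hψ_pair, map_zero, zero_add, map_neg, hψ2_single]
        symm
        apply eq_neg_of_add_eq_zero_left
        rw [← map_add, hπ, QuotientAddGroup.mk'_apply, QuotientAddGroup.eq_zero_iff]
        exact memg g
  -- ψ ∘ φbar = id
  have hφbar_mk : ∀ x : G →₀ ℤ, φbar (π x) = φ x := by
    intro x
    rw [hφbar, hπ, QuotientAddGroup.mk'_apply]
    exact QuotientAddGroup.lift_mk' (relQ G) hker x
  have left : ψ.comp φbar = AddMonoidHom.id _ := by
    apply QuotientAddGroup.addMonoidHom_ext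
    apply Finsupp.addHom_ext'
    intro g
    apply AddMonoidHom.ext_int
    simp only [AddMonoidHom.comp_apply, Finsupp.singleAddHom_apply, AddMonoidHom.id_apply]
    rw [show (QuotientAddGroup.mk' (relQ G)) (Finsupp.single g (1:ℤ)) =
      π (Finsupp.single g (1:ℤ)) from rfl]
    rw [hφbar_mk, hφ_single, key]
  -- φbar ∘ ψ1 = inl
  have r1 : φbar.comp ψ1 = AddMonoidHom.inl _ (S →₀ ℤ) := by
    apply Finsupp.addHom_ext'
    intro t
    apply zmod_hom_ext
    simp only [AddMonoidHom.comp_apply, Finsupp.singleAddHom_apply, AddMonoidHom.inl_apply]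
    rw [hψ1_single, hφbar_mk, hφ_single, tgt]
    simp only [t.2.1, t.2.2, dif_pos, dif_neg, not_false_iff]
    congr 1
  -- φbar ∘ ψ2 = inr
  have r2 : φbar.comp ψ2 = AddMonoidHom.inr ({g : G // g ^ 2 = 1 ∧ g ≠ 1} →₀ ZMod 2) _ := by
    apply Finsupp.addHom_ext'
    intro s
    apply AddMonoidHom.ext_int
    simp only [AddMonoidHom.comp_apply, Finsupp.singleAddHom_apply, AddMonoidHom.inr_apply]
    rw [hψ2_single, hφbar_mk, hφ_single, tgt]
    have hs2 : ¬ ((s : G) ^ 2 = 1) := hS s s.2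
    simp only [hs2, s.2, dif_neg, not_false_iff, dif_pos]
    congr 1
  have right : φbar.comp ψ = AddMonoidHom.id T := by
    apply AddMonoidHom.ext
    rintro ⟨a, b⟩
    have h1 := DFunLike.congr_fun r1 a
    have h2 := DFunLike.congr_fun r2 b
    simp only [AddMonoidHom.comp_apply, AddMonoidHom.inl_apply, AddMonoidHom.inr_apply] at h1 h2
    simp only [AddMonoidHom.comp_apply, AddMonoidHom.id_apply, hψ_pair, map_add, h1, h2,
      Prod.mk_add_mk, add_zero, zero_add]
    rw [AddMonoidHom.inl_apply, AddMonoidHom.inr_apply, Prod.mk_add_mk, add_zero, zero_add]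
  exact ⟨AddMonoidHom.toAddEquiv φbar ψ left right⟩
end

section
/- Let G be a group and Q = Z[G]/⟨g + g⁻¹, 1⟩, with conj the involution of Q induced by g ↦ g⁻¹. The subgroup {ζ ∈ Q : ζ = conj(ζ)} is an elementary abelian 2-group (every element has order dividing 2). -/
theorem stmt18 (G : Type*) [Group G]
    (conjQ : ((G →₀ ℤ) ⧸ relQ G) →+ ((G →₀ ℤ) ⧸ relQ G))
    (hconjQ : ∀ g : G,
      conjQ ((QuotientAddGroup.mk' (relQ G)) (Finsupp.single g 1)) =
        (QuotientAddGroup.mk' (relQ G)) (Finsupp.single g⁻¹ 1)) :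
    ∀ ζ : (G →₀ ℤ) ⧸ relQ G, conjQ ζ = ζ → ζ + ζ = 0 := by
  set mk := QuotientAddGroup.mk' (relQ G) with hmk
  have h0 : ∀ g : G, mk (Finsupp.single g 1) + mk (Finsupp.single g⁻¹ 1) = 0 := by
    intro g
    rw [← map_add, ← AddMonoidHom.mem_ker, QuotientAddGroup.ker_mk']
    exact AddSubgroup.subset_closure (Or.inr ⟨g, rfl⟩)
  have hneg : ∀ g : G, mk (Finsupp.single g⁻¹ 1) = - mk (Finsupp.single g 1) :=
    fun g => eq_neg_of_add_eq_zero_right (h0 g)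
  -- conjQ is negation on all of Q
  have hconj_all : ∀ ζ : (G →₀ ℤ) ⧸ relQ G, conjQ ζ = -ζ := by
    intro ζ
    obtain ⟨x, rfl⟩ := QuotientAddGroup.mk'_surjective (relQ G) ζ
    induction x using Finsupp.induction with
    | zero => simp
    | single_add g n f _ _ ih =>
      have hsingle : (Finsupp.single g n : G →₀ ℤ) = n • Finsupp.single g 1 := by
        simp [Finsupp.smul_single]
      rw [map_add, map_add, neg_add, ih]
      congr 1
      rw [hsingle, map_zsmul, map_zsmul, hconjQ, hneg]; simp; rfl
  intro ζ hζ
  have := hconj_all ζ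
  rw [hζ] at this
  nth_rewrite 2 [this]
  exact add_neg_cancel ζ
end
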